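/- Asymptotic stability of the interior equilibrium with domain of attraction the positive orthant (Proposition 8). Assume k_i > 0 and V_i^* > 0 for all i, and let V̄ ∈ int(ℝⁿ₊) satisfy Ψ^ℓ V̄ + b = 0. Then every continuously differentiable solution V : [0,∞) → ℝⁿ of V̇_i(t) = V_i(t) ((Ψ^ℓ V(t))_i + b_i) with V(0) ∈ int(ℝⁿ₊) remains in int(ℝⁿ₊) for all t ≥ 0 and satisfies V(t) → V̄ as t → ∞. -/

import Mathlib

open Finset Matrix Filter

private noncomputable def hfun (x : ℝ) : ℝ := x - 1 - Real.log x - (x-1)^2/(2*(x+1))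
private noncomputable def hfun' (x : ℝ) : ℝ :=
  1 - x⁻¹ - ((2*(x-1))*(2*(x+1)) - (x-1)^2*2)/(2*(x+1))^2

private lemma hfun_hasDeriv {x : ℝ} (hx : 0 < x) : HasDerivAt hfun (hfun' x) x := by
  have h1 : HasDerivAt (fun x : ℝ => x - 1 - Real.log x) (1 - x⁻¹) x :=
    ((hasDerivAt_id x).sub_const 1).sub (Real.hasDerivAt_log hx.ne')
  have h2 : HasDerivAt (fun x : ℝ => (x-1)^2/(2*(x+1)))
      (((2*(x-1))*(2*(x+1)) - (x-1)^2*2)/(2*(x+1))^2) x := by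
    have hnum : HasDerivAt (fun x : ℝ => (x-1)^2) (2*(x-1)) x := by
      have := ((hasDerivAt_id x).sub_const 1).fun_pow 2
      simpa [mul_comm] using this
    have hden : HasDerivAt (fun x : ℝ => 2*(x+1)) 2 x := by
      simpa using ((hasDerivAt_id x).add_const 1).const_mul 2
    exact hnum.div hden (by positivity)
  exact h1.sub h2

private lemma hfun'_nonneg {x : ℝ} (hx : 1 ≤ x) : 0 ≤ hfun' x := by
  have hx0 : 0 < x := by linarith
  have h : hfun' x = (x-1)*(x^2+x+2)/(2*x*(x+1)^2) := by
    rw [hfun']; field_simp; ring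
  rw [h]
  apply div_nonneg
  · nlinarith
  · positivity

private lemma hfun'_nonpos {x : ℝ} (hx0 : 0 < x) (hx : x ≤ 1) : hfun' x ≤ 0 := by
  have h : hfun' x = (x-1)*(x^2+x+2)/(2*x*(x+1)^2) := by
    rw [hfun']; field_simp; ring
  rw [h]
  apply div_nonpos_of_nonpos_of_nonneg
  · nlinarith
  · positivity

private lemma lemA {x : ℝ} (hx : 0 < x) : (x-1)^2/(2*(x+1)) ≤ x - 1 - Real.log x := by
  have key : 0 ≤ hfun x := by
    rcases le_total 1 x with h | h
    · have hm : MonotoneOn hfun (Set.Ici 1) := by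
        apply monotoneOn_of_hasDerivWithinAt_nonneg (convex_Ici 1)
          (f' := hfun')
        · intro y hy
          exact (hfun_hasDeriv (by simp at hy; linarith)).continuousAt.continuousWithinAt
        · intro y hy
          rw [interior_Ici] at hy
          exact (hfun_hasDeriv (by simp at hy; linarith)).hasDerivWithinAt
        · intro y hy
          rw [interior_Ici] at hy
          exact hfun'_nonneg (le_of_lt hy)
      have := hm (Set.mem_Ici.2 le_rfl) (Set.mem_Ici.2 h) h
      simpa [hfun] using this
    · have hm : AntitoneOn hfun (Set.Ioc 0 1) := by
        apply antitoneOn_of_hasDerivWithinAt_nonpos (convex_Ioc 0 1)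
          (f' := hfun')
        · intro y hy
          exact (hfun_hasDeriv hy.1).continuousAt.continuousWithinAt
        · intro y hy
          rw [interior_Ioc] at hy
          exact (hfun_hasDeriv hy.1).hasDerivWithinAt
        · intro y hy
          rw [interior_Ioc] at hy
          exact hfun'_nonpos hy.1 hy.2.le
      have := hm (Set.mem_Ioc.2 ⟨hx, h⟩) (Set.mem_Ioc.2 ⟨one_pos, le_rfl⟩) h
      simpa [hfun] using this
  rw [hfun] at key; linarith

private lemma lemB {x : ℝ} (hx : 0 < x) : x - 1 - Real.log x ≤ (x-1)^2/x := by
  have h := Real.log_le_sub_one_of_pos (x := x⁻¹) (by positivity)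
  rw [Real.log_inv] at h
  have h1 : (1:ℝ) - x⁻¹ ≤ Real.log x := by linarith
  have h2 : x - 1 - Real.log x ≤ x - 1 - (1 - x⁻¹) := by linarith
  calc x - 1 - Real.log x ≤ x - 1 - (1 - x⁻¹) := h2
    _ = (x-1)^2/x := by field_simp

private lemma lemLogSqrt {x : ℝ} (hx : 0 < x) : Real.log x ≤ 2 * Real.sqrt x := by
  have hs : 0 < Real.sqrt x := Real.sqrt_pos.2 hx
  have h := Real.log_le_sub_one_of_pos hs
  have h2 : Real.log x = 2 * Real.log (Real.sqrt x) := by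
    have := Real.log_sqrt hx.le
    linarith
  rw [h2]; nlinarith

private lemma qf_aux {n : ℕ} (a : Fin n → Fin n → ℝ)
    (hsymm : ∀ i j, a i j = a j i) (hnn : ∀ i j, 0 ≤ a i j) (e : Fin n → ℝ) :
    ∑ i, ∑ j, a i j * (e i * e j) ≤ ∑ i, ∑ j, a i j * e i ^ 2 := by
  have hT : (0:ℝ) ≤ ∑ i, ∑ j, a i j * (e i - e j)^2 := by
    apply Finset.sum_nonneg; intro i _
    apply Finset.sum_nonneg; intro j _
    exact mul_nonneg (hnn i j) (sq_nonneg _)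
  have hswap : ∑ i, ∑ j, a i j * e j ^ 2 = ∑ i, ∑ j, a i j * e i ^ 2 := by
    rw [Finset.sum_comm]
    apply Finset.sum_congr rfl; intro i _
    apply Finset.sum_congr rfl; intro j _
    rw [hsymm]
  have expand : ∑ i, ∑ j, a i j * (e i - e j)^2
      = ∑ i, ∑ j, (a i j * e i ^ 2 - 2 * (a i j * (e i * e j)) + a i j * e j ^ 2) := by
    apply Finset.sum_congr rfl; intro i _
    apply Finset.sum_congr rfl; intro j _
    ring
  simp only [Finset.sum_add_distrib, Finset.sum_sub_distrib, ← Finset.mul_sum] at expand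
  rw [expand, hswap] at hT
  linarith

private lemma qf_le {n : ℕ} (B : Fin n → Fin n → ℝ) (Bsh k : Fin n → ℝ)
    (Ψℓ : Matrix (Fin n) (Fin n) ℝ)
    (hBsymm : ∀ i j, B i j = B j i)
    (hBsh : ∀ i, 0 ≤ Bsh i)
    (hΨdiag : ∀ i,
      Ψℓ i i = -((Bsh i + ∑ j ∈ Finset.univ.erase i, |B i j|) + k i))
    (hΨoff : ∀ i j, i ≠ j → Ψℓ i j = |B i j|)
    (e : Fin n → ℝ) :
    ∑ i, e i * Ψℓ.mulVec e i ≤ -∑ i, k i * e i ^ 2 := by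
  set a : Fin n → Fin n → ℝ := fun i j => if i = j then 0 else |B i j| with ha
  have hasymm : ∀ i j, a i j = a j i := by
    intro i j; simp only [ha]
    rcases eq_or_ne i j with h | h
    · simp [h]
    · simp [h, h.symm, hBsymm i j]
  have hann : ∀ i j, 0 ≤ a i j := by
    intro i j; simp only [ha]; split <;> [rfl; exact abs_nonneg _]
  have key : ∀ i, e i * Ψℓ.mulVec e i
      = Ψℓ i i * e i ^ 2 + ∑ j, a i j * (e i * e j) := by
    intro i
    rw [Matrix.mulVec, dotProduct, Finset.mul_sum]
    rw [← Finset.add_sum_erase _ (fun j => a i j * (e i * e j)) (Finset.mem_univ i)]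
    rw [← Finset.add_sum_erase _ (fun j => e i * (Ψℓ i j * e j)) (Finset.mem_univ i)]
    simp only [ha, if_pos rfl, zero_mul, zero_add]
    congr 1
    · ring
    · apply Finset.sum_congr rfl; intro j hj
      have hij : i ≠ j := fun h => (Finset.mem_erase.1 hj).1 h.symm
      rw [hΨoff i j hij, if_neg hij]
      ring
  have hS : ∀ i, ∑ j, a i j = ∑ j ∈ Finset.univ.erase i, |B i j| := by
    intro i
    rw [← Finset.add_sum_erase _ (fun j => a i j) (Finset.mem_univ i)]
    simp only [ha, if_pos rfl, zero_add]
    apply Finset.sum_congr rfl; intro j hj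
    rw [if_neg (fun h => (Finset.mem_erase.1 hj).1 h.symm)]
  have hq := qf_aux a hasymm hann e
  calc ∑ i, e i * Ψℓ.mulVec e i
      = ∑ i, Ψℓ i i * e i ^ 2 + ∑ i, ∑ j, a i j * (e i * e j) := by
        rw [← Finset.sum_add_distrib]; exact Finset.sum_congr rfl fun i _ => key i
    _ ≤ ∑ i, Ψℓ i i * e i ^ 2 + ∑ i, ∑ j, a i j * e i ^ 2 := by linarith
    _ = ∑ i, ((Ψℓ i i + ∑ j, a i j) * e i ^ 2) := by
        rw [← Finset.sum_add_distrib]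
        apply Finset.sum_congr rfl; intro i _
        rw [add_mul, Finset.sum_mul]
    _ ≤ -∑ i, k i * e i ^ 2 := by
        rw [← Finset.sum_neg_distrib]
        apply Finset.sum_le_sum
        intro i _
        rw [hΨdiag i, hS i]
        have := hBsh i
        nlinarith [sq_nonneg (e i)]

private lemma pos_invariant {f g : ℝ → ℝ} (hg : ContinuousOn g (Set.Ici 0))
    (hf : ∀ t ∈ Set.Ici (0:ℝ), HasDerivAt f (f t * g t) t)
    (h0 : 0 < f 0) : ∀ t ∈ Set.Ici (0:ℝ), 0 < f t := by
  intro t ht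
  rw [Set.mem_Ici] at ht
  by_contra hle
  push_neg at hle
  have hfc : ContinuousOn f (Set.Ici 0) :=
    fun s hs => ((hf s hs).continuousAt).continuousWithinAt
  have hzero : ∃ s ∈ Set.Icc (0:ℝ) t, f s = 0 := by
    have hsub : Set.Icc (0:ℝ) t ⊆ Set.Ici 0 := Set.Icc_subset_Ici_self
    have hiv := intermediate_value_Icc' ht (hfc.mono hsub)
    have h0mem : (0:ℝ) ∈ Set.Icc (f t) (f 0) := ⟨hle, h0.le⟩
    obtain ⟨s, hs, hfs⟩ := hiv h0mem
    exact ⟨s, hs, hfs⟩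
  set S : Set ℝ := Set.Icc 0 t ∩ f ⁻¹' {0} with hS
  have hSne : S.Nonempty := by
    obtain ⟨s, hs, hfs⟩ := hzero
    exact ⟨s, hs, by simpa using hfs⟩
  have hSclosed : IsClosed S :=
    (hfc.mono Set.Icc_subset_Ici_self).preimage_isClosed_of_isClosed isClosed_Icc isClosed_singleton
  have hSbdd : BddBelow S := ⟨0, fun s hs => hs.1.1⟩
  set t₀ := sInf S with ht₀
  have ht₀S : t₀ ∈ S := hSclosed.csInf_mem hSne hSbdd
  have ht₀0 : 0 ≤ t₀ := ht₀S.1.1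
  have hft₀ : f t₀ = 0 := ht₀S.2
  have hpos : ∀ s ∈ Set.Ico (0:ℝ) t₀, 0 < f s := by
    intro s hs
    rcases lt_trichotomy (f s) 0 with h | h | h
    · exfalso
      have hiv := intermediate_value_Icc' hs.1 (hfc.mono Set.Icc_subset_Ici_self)
      obtain ⟨u, hu, hfu⟩ := hiv ⟨h.le, h0.le⟩
      have huS : u ∈ S := ⟨⟨hu.1, le_trans hu.2 (le_trans hs.2.le (ht₀S.1.2))⟩, by simpa using hfu⟩
      have h1 := csInf_le hSbdd huS
      have h2 : t₀ ≤ s := le_trans h1 hu.2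
      exact absurd hs.2 (not_lt.2 h2)
    · exfalso
      have hsS : s ∈ S := ⟨⟨hs.1, le_trans hs.2.le ht₀S.1.2⟩, by simpa using h⟩
      exact absurd hs.2 (not_lt.2 (csInf_le hSbdd hsS))
    · exact h
  obtain ⟨K, hK⟩ := IsCompact.exists_bound_of_continuousOn isCompact_Icc
    (hg.mono (Set.Icc_subset_Ici_self : Set.Icc 0 t₀ ⊆ Set.Ici 0))
  set w : ℝ → ℝ := fun s => f s * Real.exp (K * s) with hw
  have hwmono : MonotoneOn w (Set.Icc 0 t₀) := by
    apply monotoneOn_of_hasDerivWithinAt_nonneg (convex_Icc 0 t₀)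
      (f' := fun s => f s * g s * Real.exp (K * s) + f s * (Real.exp (K * s) * K))
    · apply ContinuousOn.mul (hfc.mono Set.Icc_subset_Ici_self)
      exact (Real.continuous_exp.comp (continuous_const.mul continuous_id)).continuousOn
    · intro s hs
      rw [interior_Icc] at hs
      have hexp : HasDerivAt (fun s => Real.exp (K * s)) (Real.exp (K * s) * K) s := by
        have := (Real.hasDerivAt_exp (K * s)).comp s ((hasDerivAt_id s).const_mul K)
        simpa [mul_comm, Function.comp_def] using this
      exact (((hf s (Set.mem_Ici.2 hs.1.le)).mul hexp)).hasDerivWithinAt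
    · intro s hs
      rw [interior_Icc] at hs
      have hfs : 0 < f s := hpos s ⟨hs.1.le, hs.2⟩
      have hgs : -K ≤ g s := by
        have h := hK s ⟨hs.1.le, hs.2.le⟩
        rw [Real.norm_eq_abs] at h
        linarith [(abs_le.1 h).1]
      have hmul : 0 ≤ f s * (g s + K) := mul_nonneg hfs.le (by linarith)
      have hexp : 0 < Real.exp (K * s) := Real.exp_pos _
      nlinarith
  have hmono := hwmono (Set.left_mem_Icc.2 ht₀0) (Set.right_mem_Icc.2 ht₀0) ht₀0
  rw [hw] at hmono
  simp only [hft₀, zero_mul, mul_zero] at hmono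
  have h1 : 0 < f 0 * Real.exp 0 := by positivity
  linarith

/-- Asymptotic stability of the interior equilibrium with domain
of attraction the open positive orthant (Proposition 8). Every solution of
`V̇ᵢ = Vᵢ ((Ψℓ V)ᵢ + bᵢ)` starting in the open positive orthant stays there and
converges to the interior equilibrium `V̄`. -/
theorem decoupled_equilibrium_asymptotically_stable
    (n : ℕ) (hn : 1 ≤ n)
    (B : Fin n → Fin n → ℝ) (Bsh k Vst : Fin n → ℝ)
    (hBsymm : ∀ i j, B i j = B j i)
    (hBle : ∀ i j, i ≠ j → B i j ≤ 0)
    (hBsh : ∀ i, 0 ≤ Bsh i)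
    (hk : ∀ i, 0 < k i)
    (hVst : ∀ i, 0 < Vst i)
    (b : Fin n → ℝ) (hb : ∀ i, b i = k i * Vst i)
    (Ψℓ : Matrix (Fin n) (Fin n) ℝ)
    (hΨdiag : ∀ i,
      Ψℓ i i = -((Bsh i + ∑ j ∈ Finset.univ.erase i, |B i j|) + k i))
    (hΨoff : ∀ i j, i ≠ j → Ψℓ i j = |B i j|)
    (Vbar : Fin n → ℝ)
    (hVbar_pos : ∀ i, 0 < Vbar i)
    (hVbar_eq : Ψℓ.mulVec Vbar + b = 0)
    (V : ℝ → Fin n → ℝ)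
    (hC1 : ∀ i, ContDiffOn ℝ 1 (fun t => V t i) (Set.Ici 0))
    (hODE : ∀ i, ∀ t ∈ Set.Ici (0 : ℝ),
      HasDerivAt (fun s => V s i) (V t i * (Ψℓ.mulVec (V t) i + b i)) t)
    (hV0 : ∀ i, 0 < V 0 i) :
    (∀ t ∈ Set.Ici (0 : ℝ), ∀ i, 0 < V t i) ∧
    Tendsto V atTop (nhds Vbar) := by
  -- continuity of solution components
  have hVcont : ∀ i, ContinuousOn (fun t => V t i) (Set.Ici 0) :=
    fun i => (hC1 i).continuousOn
  -- continuity of the "gain" functions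
  have hgcont : ∀ i, ContinuousOn (fun t => Ψℓ.mulVec (V t) i + b i) (Set.Ici 0) := by
    intro i
    apply ContinuousOn.add _ continuousOn_const
    have : (fun t => Ψℓ.mulVec (V t) i) = (fun t => ∑ j, Ψℓ i j * V t j) := by
      funext t; rfl
    rw [this]
    exact continuousOn_finset_sum _ fun j _ => (hVcont j).const_smul (Ψℓ i j)
  -- positivity
  have hVpos : ∀ t ∈ Set.Ici (0:ℝ), ∀ i, 0 < V t i := by
    intro t ht i
    exact pos_invariant (hgcont i) (hODE i) (hV0 i) t ht
  refine ⟨hVpos, ?_⟩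
  -- abbreviations
  set e : ℝ → Fin n → ℝ := fun t i => V t i - Vbar i with he
  set m : Fin n → ℝ := fun i => Vbar i - Vbar i * Real.log (Vbar i) with hm
  set Φmin : ℝ := ∑ i, m i with hΦmin
  set F : ℝ → ℝ := fun t => ∑ i, (V t i - Vbar i * Real.log (V t i)) with hF
  set Fd : ℝ → ℝ := fun t => ∑ i, e t i * Ψℓ.mulVec (e t) i with hFd
  -- equilibrium condition componentwise
  have heq : ∀ i, Ψℓ.mulVec Vbar i + b i = 0 := by
    intro i
    have := congrFun hVbar_eq i
    simpa using this
  -- drift rewriting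
  have hdrift : ∀ t, ∀ i, Ψℓ.mulVec (V t) i + b i = Ψℓ.mulVec (e t) i := by
    intro t i
    have hsplit : Ψℓ.mulVec (V t) i = Ψℓ.mulVec (e t) i + Ψℓ.mulVec Vbar i := by
      simp only [Matrix.mulVec, dotProduct, he]
      rw [← Finset.sum_add_distrib]
      apply Finset.sum_congr rfl; intro j _
      ring
    rw [hsplit]
    have := heq i
    linarith
  -- derivative of F
  have hFderiv : ∀ t ∈ Set.Ici (0:ℝ), HasDerivAt F (Fd t) t := by
    intro t ht
    have : HasDerivAt F (∑ i, (e t i * Ψℓ.mulVec (e t) i)) t := by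
      apply HasDerivAt.fun_sum
      intro i _
      have hpos := hVpos t ht i
      have hD := hODE i t ht
      have hlog : HasDerivAt (fun s => Real.log (V s i))
          ((V t i)⁻¹ * (V t i * (Ψℓ.mulVec (V t) i + b i))) t :=
        by have := (Real.hasDerivAt_log hpos.ne').comp t hD; exact this
      have hterm := hD.sub (hlog.const_mul (Vbar i))
      have hval : V t i * (Ψℓ.mulVec (V t) i + b i)
          - Vbar i * ((V t i)⁻¹ * (V t i * (Ψℓ.mulVec (V t) i + b i)))
          = e t i * Ψℓ.mulVec (e t) i := by
        rw [← hdrift t i]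
        field_simp
        ring
      rw [hval] at hterm
      exact hterm
    exact this
  -- derivative bound
  have hFdle : ∀ t, Fd t ≤ -∑ i, k i * (e t i)^2 := by
    intro t
    exact qf_le B Bsh k Ψℓ hBsymm hBsh hΨdiag hΨoff (e t)
  -- continuity of F
  have hFcont : ContinuousOn F (Set.Ici 0) := by
    apply continuousOn_finset_sum
    intro i _
    apply ContinuousOn.sub (hVcont i)
    apply ContinuousOn.mul continuousOn_const
    apply ContinuousOn.log (hVcont i)
    intro t ht
    exact (hVpos t ht i).ne'
  -- F is antitone on Ici 0
  have hFanti : AntitoneOn F (Set.Ici 0) := by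
    apply antitoneOn_of_hasDerivWithinAt_nonpos (convex_Ici 0) hFcont (f' := Fd)
    · intro t ht
      rw [interior_Ici] at ht
      exact (hFderiv t (Set.mem_Ici.2 (le_of_lt ht))).hasDerivWithinAt
    · intro t ht
      rw [interior_Ici] at ht
      have h1 := hFdle t
      have h2 : 0 ≤ ∑ i, k i * (e t i)^2 :=
        Finset.sum_nonneg fun i _ => mul_nonneg (hk i).le (sq_nonneg _)
      linarith
  -- pointwise term identity and bounds
  have hterm_id : ∀ (x : ℝ), 0 < x → ∀ i,
      x - Vbar i * Real.log x - m i = Vbar i * ((x / Vbar i) - 1 - Real.log (x / Vbar i)) := by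
    intro x hx i
    have hV := hVbar_pos i
    rw [Real.log_div hx.ne' hV.ne']
    simp only [hm]
    field_simp
    ring
  have hterm_ge : ∀ (x : ℝ), 0 < x → ∀ i, m i ≤ x - Vbar i * Real.log x := by
    intro x hx i
    have hV := hVbar_pos i
    have hy : 0 < x / Vbar i := by positivity
    have h1 := lemA hy
    have h2 : 0 ≤ (x / Vbar i) - 1 - Real.log (x / Vbar i) := by
      have := sq_nonneg (x / Vbar i - 1)
      have h3 : 0 ≤ (x / Vbar i - 1)^2 / (2*(x / Vbar i + 1)) := by positivity
      linarith
    have h4 := hterm_id x hx i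
    have h5 : 0 ≤ Vbar i * (x / Vbar i - 1 - Real.log (x / Vbar i)) := mul_nonneg hV.le h2
    rw [← sub_nonneg, h4]
    exact h5
  -- bounds for terms along the trajectory
  have htermF : ∀ t ∈ Set.Ici (0:ℝ), ∀ i,
      V t i - Vbar i * Real.log (V t i) ≤ F t - Φmin + m i := by
    intro t ht i
    have h1 : F t = (V t i - Vbar i * Real.log (V t i))
        + ∑ j ∈ Finset.univ.erase i, (V t j - Vbar j * Real.log (V t j)) := by
      rw [hF]
      exact (Finset.add_sum_erase _ _ (Finset.mem_univ i)).symm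
    have h2 : Φmin = m i + ∑ j ∈ Finset.univ.erase i, m j := by
      rw [hΦmin]
      exact (Finset.add_sum_erase _ _ (Finset.mem_univ i)).symm
    have h3 : ∑ j ∈ Finset.univ.erase i, m j
        ≤ ∑ j ∈ Finset.univ.erase i, (V t j - Vbar j * Real.log (V t j)) :=
      Finset.sum_le_sum fun j _ => hterm_ge (V t j) (hVpos t ht j) j
    linarith
  -- term upper bound along the trajectory
  set R : Fin n → ℝ := fun i => F 0 - Φmin + m i with hRdef
  have hRle : ∀ t ∈ Set.Ici (0:ℝ), ∀ i, V t i - Vbar i * Real.log (V t i) ≤ R i := by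
    intro t ht i
    have h1 := htermF t ht i
    have h2 : F t ≤ F 0 := hFanti (Set.self_mem_Ici) ht ht
    simp only [hRdef]
    linarith
  -- lower bound on the trajectory
  set δ : Fin n → ℝ := fun i => Real.exp (-(R i) / Vbar i) with hδdef
  have hδpos : ∀ i, 0 < δ i := fun i => Real.exp_pos _
  have hVlow : ∀ t ∈ Set.Ici (0:ℝ), ∀ i, δ i ≤ V t i := by
    intro t ht i
    have hx := hVpos t ht i
    have hV := hVbar_pos i
    have h1 := hRle t ht i
    have h2 : -(R i) / Vbar i ≤ Real.log (V t i) := by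
      rw [div_le_iff₀ hV]
      nlinarith
    calc δ i = Real.exp (-(R i) / Vbar i) := rfl
      _ ≤ Real.exp (Real.log (V t i)) := Real.exp_le_exp.2 h2
      _ = V t i := Real.exp_log hx
  -- upper bound on the trajectory
  set U : Fin n → ℝ := fun i => (Vbar i + Real.sqrt (R i + Vbar i ^ 2))^2 with hUdef
  have hVup : ∀ t ∈ Set.Ici (0:ℝ), ∀ i, V t i ≤ U i := by
    intro t ht i
    have hx := hVpos t ht i
    have hV := hVbar_pos i
    have h1 := hRle t ht i
    have hlog := lemLogSqrt hx
    set s := Real.sqrt (V t i) with hsdef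
    have hs0 : 0 ≤ s := Real.sqrt_nonneg _
    have hs2 : s^2 = V t i := Real.sq_sqrt hx.le
    have hsq : (s - Vbar i)^2 ≤ R i + Vbar i ^ 2 := by nlinarith
    have hs3 : s - Vbar i ≤ Real.sqrt (R i + Vbar i ^ 2) := by
      calc s - Vbar i ≤ |s - Vbar i| := le_abs_self _
        _ = Real.sqrt ((s - Vbar i)^2) := (Real.sqrt_sq_eq_abs _).symm
        _ ≤ Real.sqrt (R i + Vbar i ^ 2) := Real.sqrt_le_sqrt hsq
    have hs4 : s ≤ Vbar i + Real.sqrt (R i + Vbar i ^ 2) := by linarith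
    calc V t i = s^2 := hs2.symm
      _ ≤ (Vbar i + Real.sqrt (R i + Vbar i ^ 2))^2 := by
          apply pow_le_pow_left₀ hs0 hs4
      _ = U i := rfl
  -- nonnegativity of F - Φmin
  have hFnn : ∀ t ∈ Set.Ici (0:ℝ), 0 ≤ F t - Φmin := by
    intro t ht
    have : Φmin ≤ F t := by
      rw [hΦmin, hF]
      exact Finset.sum_le_sum fun i _ => hterm_ge (V t i) (hVpos t ht i) i
    linarith
  -- upper estimate:  F - Φmin ≤ ∑ eᵢ²/δᵢ
  have hFub : ∀ t ∈ Set.Ici (0:ℝ), F t - Φmin ≤ ∑ i, (e t i)^2 / δ i := by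
    intro t ht
    have h1 : F t - Φmin = ∑ i, ((V t i - Vbar i * Real.log (V t i)) - m i) := by
      rw [hF, hΦmin, ← Finset.sum_sub_distrib]
    rw [h1]
    apply Finset.sum_le_sum
    intro i _
    have hx := hVpos t ht i
    have hV := hVbar_pos i
    have hy : 0 < V t i / Vbar i := by positivity
    have hid := hterm_id (V t i) hx i
    have hB := lemB hy
    have halg : Vbar i * ((V t i / Vbar i - 1)^2 / (V t i / Vbar i))
        = (V t i - Vbar i)^2 / V t i := by
      field_simp
    have h2 : V t i - Vbar i * Real.log (V t i) - m i ≤ (V t i - Vbar i)^2 / V t i := by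
      rw [hid, ← halg]
      apply mul_le_mul_of_nonneg_left hB hV.le
    have h3 : (V t i - Vbar i)^2 / V t i ≤ (V t i - Vbar i)^2 / δ i :=
      div_le_div_of_nonneg_left (sq_nonneg _) (hδpos i) (hVlow t ht i)
    have he' : e t i = V t i - Vbar i := rfl
    rw [he']
    linarith
  -- lower estimate: eᵢ² ≤ 2(Uᵢ+V̄ᵢ)(F - Φmin)
  have hFlb : ∀ t ∈ Set.Ici (0:ℝ), ∀ i,
      (e t i)^2 ≤ 2*(U i + Vbar i) * (F t - Φmin) := by
    intro t ht i
    have hx := hVpos t ht i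
    have hV := hVbar_pos i
    have hy : 0 < V t i / Vbar i := by positivity
    have hid := hterm_id (V t i) hx i
    have hA := lemA hy
    have halg : Vbar i * ((V t i / Vbar i - 1)^2 / (2*(V t i / Vbar i + 1)))
        = (V t i - Vbar i)^2 / (2*(V t i + Vbar i)) := by
      field_simp
    have h2 : (V t i - Vbar i)^2 / (2*(V t i + Vbar i))
        ≤ V t i - Vbar i * Real.log (V t i) - m i := by
      rw [hid, ← halg]
      apply mul_le_mul_of_nonneg_left hA hV.le
    -- the term is at most F t - Φmin
    have h3 : V t i - Vbar i * Real.log (V t i) - m i ≤ F t - Φmin := by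
      have h4 : F t = (V t i - Vbar i * Real.log (V t i))
          + ∑ j ∈ Finset.univ.erase i, (V t j - Vbar j * Real.log (V t j)) := by
        rw [hF]
        exact (Finset.add_sum_erase _ _ (Finset.mem_univ i)).symm
      have h5 : Φmin = m i + ∑ j ∈ Finset.univ.erase i, m j := by
        rw [hΦmin]
        exact (Finset.add_sum_erase _ _ (Finset.mem_univ i)).symm
      have h6 : ∑ j ∈ Finset.univ.erase i, m j
          ≤ ∑ j ∈ Finset.univ.erase i, (V t j - Vbar j * Real.log (V t j)) :=
        Finset.sum_le_sum fun j _ => hterm_ge (V t j) (hVpos t ht j) j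
      linarith
    have hpos2 : 0 < 2*(V t i + Vbar i) := by linarith
    have h7 : (V t i - Vbar i)^2 ≤ 2*(V t i + Vbar i) * (F t - Φmin) := by
      rw [div_le_iff₀ hpos2] at h2
      have h9 := mul_le_mul_of_nonneg_right h3 hpos2.le
      calc (V t i - Vbar i)^2 ≤ (F t - Φmin) * (2*(V t i + Vbar i)) := by linarith [h2, h9]
        _ = 2*(V t i + Vbar i) * (F t - Φmin) := by ring
    have h8 : 2*(V t i + Vbar i) ≤ 2*(U i + Vbar i) := by
      have := hVup t ht i
      linarith
    have he' : e t i = V t i - Vbar i := rfl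
    rw [he']
    calc (V t i - Vbar i)^2 ≤ 2*(V t i + Vbar i) * (F t - Φmin) := h7
      _ ≤ 2*(U i + Vbar i) * (F t - Φmin) :=
          mul_le_mul_of_nonneg_right h8 (hFnn t ht)
  -- decay rate
  haveI : Nonempty (Fin n) := ⟨⟨0, hn⟩⟩
  have hne : (Finset.univ : Finset (Fin n)).Nonempty := Finset.univ_nonempty
  set ρ : ℝ := Finset.univ.inf' hne (fun i => k i * δ i) with hρdef
  have hρpos : 0 < ρ := by
    rw [hρdef]
    exact (Finset.lt_inf'_iff _).2 fun i _ => mul_pos (hk i) (hδpos i)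
  have hρle : ∀ i, ρ ≤ k i * δ i := fun i => Finset.inf'_le _ (Finset.mem_univ i)
  -- key differential inequality
  have hkey : ∀ t ∈ Set.Ici (0:ℝ), Fd t + ρ * (F t - Φmin) ≤ 0 := by
    intro t ht
    have h1 : ρ * (F t - Φmin) ≤ ρ * ∑ i, (e t i)^2 / δ i :=
      mul_le_mul_of_nonneg_left (hFub t ht) hρpos.le
    have h2 : ρ * ∑ i, (e t i)^2 / δ i ≤ ∑ i, k i * (e t i)^2 := by
      rw [Finset.mul_sum]
      apply Finset.sum_le_sum
      intro i _
      have hδ := hδpos i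
      have h3 : ρ * ((e t i)^2 / δ i) ≤ (k i * δ i) * ((e t i)^2 / δ i) :=
        mul_le_mul_of_nonneg_right (hρle i) (by positivity)
      have h4 : (k i * δ i) * ((e t i)^2 / δ i) = k i * (e t i)^2 := by
        field_simp
      linarith
    have h5 := hFdle t
    linarith
  -- Gronwall: G(t) = (F t - Φmin) exp(ρ t) is antitone
  set G : ℝ → ℝ := fun t => (F t - Φmin) * Real.exp (ρ * t) with hGdef
  have hGanti : AntitoneOn G (Set.Ici 0) := by
    apply antitoneOn_of_hasDerivWithinAt_nonpos (convex_Ici 0)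
      (f' := fun t => Fd t * Real.exp (ρ * t) + (F t - Φmin) * (Real.exp (ρ * t) * ρ))
    · apply ContinuousOn.mul (hFcont.sub continuousOn_const)
      exact (Real.continuous_exp.comp (continuous_const.mul continuous_id)).continuousOn
    · intro t ht
      rw [interior_Ici] at ht
      have hexp : HasDerivAt (fun s => Real.exp (ρ * s)) (Real.exp (ρ * t) * ρ) t := by
        have h := ((hasDerivAt_id t).const_mul ρ).exp
        simpa using h
      exact (((hFderiv t (Set.mem_Ici.2 ht.le)).sub_const Φmin).mul hexp).hasDerivWithinAt
    · intro t ht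
      rw [interior_Ici] at ht
      have h1 := hkey t (Set.mem_Ici.2 ht.le)
      have hE : 0 < Real.exp (ρ * t) := Real.exp_pos _
      have h2 : (Fd t + ρ * (F t - Φmin)) * Real.exp (ρ * t) ≤ 0 :=
        mul_nonpos_of_nonpos_of_nonneg h1 hE.le
      nlinarith
  -- exponential decay of F - Φmin
  have hGdecay : ∀ t ∈ Set.Ici (0:ℝ),
      F t - Φmin ≤ (F 0 - Φmin) * Real.exp (-(ρ * t)) := by
    intro t ht
    have h1 := hGanti (Set.self_mem_Ici) ht ht
    rw [hGdef] at h1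
    simp only [mul_zero, Real.exp_zero, mul_one] at h1
    have hE : 0 < Real.exp (ρ * t) := Real.exp_pos _
    have hE' : 0 ≤ Real.exp (-(ρ * t)) := (Real.exp_pos _).le
    have h2 := mul_le_mul_of_nonneg_right h1 hE'
    have h3 : (F t - Φmin) * Real.exp (ρ * t) * Real.exp (-(ρ * t)) = F t - Φmin := by
      rw [mul_assoc, ← Real.exp_add]
      simp
    rw [h3] at h2
    exact h2
  -- F t - Φmin → 0
  have htendF : Tendsto (fun t => F t - Φmin) atTop (nhds 0) := by
    have hup : Tendsto (fun t : ℝ => (F 0 - Φmin) * Real.exp (-(ρ * t))) atTop (nhds 0) := by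
      have h1 : Tendsto (fun t : ℝ => -(ρ * t)) atTop atBot := by
        have := (tendsto_const_mul_atBot_of_neg (r := -ρ) (by linarith)).2
          (tendsto_id (α := ℝ))
        simpa [neg_mul] using this
      have h2 : Tendsto (fun t : ℝ => Real.exp (-(ρ * t))) atTop (nhds 0) :=
        Real.tendsto_exp_atBot.comp h1
      have := h2.const_mul (F 0 - Φmin)
      simpa using this
    apply tendsto_of_tendsto_of_tendsto_of_le_of_le' tendsto_const_nhds hup
    · exact (eventually_ge_atTop (0:ℝ)).mono fun t ht => hFnn t ht
    · exact (eventually_ge_atTop (0:ℝ)).mono fun t ht => hGdecay t ht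
  -- componentwise convergence
  rw [tendsto_pi_nhds]
  intro i
  have hzero : Tendsto (fun t => V t i - Vbar i) atTop (nhds 0) := by
    apply squeeze_zero_norm' (a := fun t => Real.sqrt (2*(U i + Vbar i) * (F t - Φmin)))
    · apply (eventually_ge_atTop (0:ℝ)).mono
      intro t ht
      rw [Real.norm_eq_abs]
      exact Real.abs_le_sqrt (hFlb t ht i)
    · have h1 : Tendsto (fun t => 2*(U i + Vbar i) * (F t - Φmin)) atTop (nhds 0) := by
        have := htendF.const_mul (2*(U i + Vbar i))
        simpa using this
      have h2 := (Real.continuous_sqrt.tendsto 0).comp h1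
      simpa [Function.comp_def] using h2
  have := hzero.add_const (Vbar i)
  simpa using this
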